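/- Let R : ℤ_p → ℤ_p be defined by R(Σ_{i≥0} a_i pⁱ) := Σ_{i≥0} a_i p^{2i+1}, where a_i ∈ {0,…,p−1} are the p-adic digits. Then R is an injective contraction (Lip(R) ≤ 1/p), the map L(Σ_{i≥0} x_i pⁱ) := Σ_{i≥0} x_{2i+1} pⁱ satisfies L ∘ R = id, but R does not satisfy any lower bi-Lipschitz bound: there is no constant c₁ > 0 with c₁·‖x−y‖_p ≤ ‖R(x)−R(y)‖_p for all x, y ∈ ℤ_p. -/

import Mathlib

set_option linter.unusedSectionVars false

namespace DigitSpread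

variable {p : ℕ} [hp : Fact p.Prime]

lemma q_pos : (0:ℝ) < (p:ℝ)⁻¹ := by
  have := hp.out.pos; positivity

lemma q_lt_one : ((p:ℝ)⁻¹ : ℝ) < 1 := by
  have h1 : (1:ℝ) < (p:ℝ) := by exact_mod_cast hp.out.one_lt
  rw [inv_lt_one_iff₀]; right; exact h1

lemma q_pow (n : ℕ) : ((p:ℝ)⁻¹)^n = (p:ℝ) ^ (-(n:ℤ)) := by
  rw [zpow_neg, zpow_natCast, inv_pow]

lemma norm_term_le (c : ℤ_[p]) (i : ℕ) :
    ‖c * (p:ℤ_[p])^i‖ ≤ ((p:ℝ)⁻¹)^i := by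
  calc ‖c * (p:ℤ_[p])^i‖ ≤ ‖c‖ * ‖(p:ℤ_[p])^i‖ := norm_mul_le _ _
    _ ≤ 1 * ((p:ℝ)⁻¹)^i := by
        apply mul_le_mul (PadicInt.norm_le_one c) _ (norm_nonneg _) zero_le_one
        rw [PadicInt.norm_p_pow, ← q_pow]
    _ = ((p:ℝ)⁻¹)^i := one_mul _

lemma summable_aux (c : ℕ → ℤ_[p]) :
    Summable (fun i => c i * (p:ℤ_[p])^i) := by
  refine Summable.of_norm_bounded (g := fun i => ((p:ℝ)⁻¹)^i) ?_ (fun i => norm_term_le _ _)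
  exact summable_geometric_of_lt_one q_pos.le q_lt_one

lemma norm_tsum_le (f : ℕ → ℤ_[p]) {C : ℝ} (hC : 0 ≤ C) (h : ∀ i, ‖f i‖ ≤ C) :
    ‖∑' i, f i‖ ≤ C :=
  IsUltrametricDist.norm_tsum_le_of_forall_le_of_nonneg hC h

lemma exists_digits (x : ℤ_[p]) :
    ∃ a : ℕ → ℕ, (∀ i, a i < p) ∧ x = ∑' i : ℕ, (a i : ℤ_[p]) * (p : ℤ_[p]) ^ i := by
  set a : ℕ → ℕ := fun i => (x.appr (i+1) - x.appr i) / p ^ i with ha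
  have hdvd : ∀ i, p ^ i ∣ x.appr (i+1) - x.appr i := fun i =>
    PadicInt.dvd_appr_sub_appr x i (i+1) (Nat.le_succ i)
  have hmul : ∀ i, a i * p ^ i = x.appr (i+1) - x.appr i := fun i =>
    Nat.div_mul_cancel (hdvd i)
  have hppos : 0 < p := hp.out.pos
  have halt : ∀ i, a i < p := by
    intro i
    have h1 : x.appr (i+1) - x.appr i < p ^ (i+1) :=
      lt_of_le_of_lt (Nat.sub_le _ _) (PadicInt.appr_lt x (i+1))
    rw [← hmul i, pow_succ] at h1
    by_contra hle
    push_neg at hle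
    have h2 : p * p ^ i ≤ a i * p ^ i := Nat.mul_le_mul_right _ hle
    rw [mul_comm (p^i) p] at h1
    omega
  have hsum : ∀ n, ∑ i ∈ Finset.range n, a i * p ^ i = x.appr n := by
    intro n
    induction n with
    | zero => simp [PadicInt.appr]
    | succ n ih =>
      rw [Finset.sum_range_succ, ih, hmul n]
      have h3 := PadicInt.appr_mono x (Nat.le_succ n); simp only [Nat.succ_eq_add_one] at h3
      omega
  refine ⟨a, halt, ?_⟩
  have hs : Summable (fun i => (a i : ℤ_[p]) * (p:ℤ_[p])^i) := summable_aux _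
  have h1 : Filter.Tendsto (fun n => ∑ i ∈ Finset.range n, (a i : ℤ_[p]) * (p:ℤ_[p])^i)
      Filter.atTop (nhds (∑' i : ℕ, (a i : ℤ_[p]) * (p : ℤ_[p]) ^ i)) :=
    hs.hasSum.tendsto_sum_nat
  have h2 : Filter.Tendsto (fun n => ∑ i ∈ Finset.range n, (a i : ℤ_[p]) * (p:ℤ_[p])^i)
      Filter.atTop (nhds x) := by
    rw [tendsto_iff_norm_sub_tendsto_zero]
    have key : ∀ n, ‖(∑ i ∈ Finset.range n, (a i : ℤ_[p]) * (p:ℤ_[p])^i) - x‖ ≤ ((p:ℝ)⁻¹)^n := by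
      intro n
      have hcast : (∑ i ∈ Finset.range n, (a i : ℤ_[p]) * (p:ℤ_[p])^i)
          = ((x.appr n : ℕ) : ℤ_[p]) := by
        rw [← hsum n]; push_cast; ring_nf
      rw [hcast, ← norm_neg, neg_sub, q_pow, PadicInt.norm_le_pow_iff_mem_span_pow]
      exact PadicInt.appr_spec n x
    have hgeo : Filter.Tendsto (fun n : ℕ => ((p:ℝ)⁻¹)^n) Filter.atTop (nhds 0) :=
      tendsto_pow_atTop_nhds_zero_of_lt_one q_pos.le q_lt_one
    exact squeeze_zero (fun n => norm_nonneg _) key hgeo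
  exact tendsto_nhds_unique h2 h1

lemma sum_digits_lt (a : ℕ → ℕ) (ha : ∀ i, a i < p) (n : ℕ) :
    ∑ i ∈ Finset.range n, a i * p ^ i < p ^ n := by
  induction n with
  | zero => simp
  | succ n ih =>
    rw [Finset.sum_range_succ, pow_succ]
    have h1 : a n * p ^ n ≤ (p - 1) * p ^ n :=
      Nat.mul_le_mul_right _ (by have := ha n; omega)
    have h2 : (p - 1) * p ^ n + p ^ n = p ^ n * p := by
      have hp1 : p - 1 + 1 = p := by have := hp.out.pos; omega
      calc (p - 1) * p ^ n + p ^ n = (p - 1 + 1) * p ^ n := by ring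
        _ = p ^ n * p := by rw [hp1]; ring
    omega

lemma nat_digits_unique : ∀ (n : ℕ) (a b : ℕ → ℕ), (∀ i, a i < p) → (∀ i, b i < p) →
    (∑ i ∈ Finset.range n, a i * p ^ i) = (∑ i ∈ Finset.range n, b i * p ^ i) →
    ∀ i < n, a i = b i := by
  intro n
  induction n with
  | zero => intro a b _ _ _ i hi; omega
  | succ n ih =>
    intro a b ha hb hsum i hi
    have key : ∀ c : ℕ → ℕ, ∑ i ∈ Finset.range (n+1), c i * p ^ i
        = c 0 + (∑ i ∈ Finset.range n, c (i+1) * p ^ i) * p := by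
      intro c
      rw [Finset.sum_range_succ', Finset.sum_mul]
      simp [pow_succ, mul_assoc, mul_comm]
      ring
    rw [key a, key b] at hsum
    set A := ∑ i ∈ Finset.range n, a (i+1) * p ^ i with hA
    set B := ∑ i ∈ Finset.range n, b (i+1) * p ^ i with hB
    have h0 : a 0 = b 0 := by
      have e1 : (a 0 + A * p) % p = a 0 := by
        rw [Nat.add_mul_mod_self_right, Nat.mod_eq_of_lt (ha 0)]
      have e2 : (b 0 + B * p) % p = b 0 := by
        rw [Nat.add_mul_mod_self_right, Nat.mod_eq_of_lt (hb 0)]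
      rw [← e1, ← e2, hsum]
    have hAB : A = B := by
      have : A * p = B * p := by omega
      exact Nat.eq_of_mul_eq_mul_right hp.out.pos this
    rcases Nat.eq_zero_or_pos i with h | h
    · subst h; exact h0
    · obtain ⟨j, rfl⟩ := Nat.exists_eq_add_of_lt h
      simp only [Nat.zero_add] at *
      exact ih (fun k => a (k+1)) (fun k => b (k+1)) (fun k => ha _) (fun k => hb _) hAB j (by omega)

lemma digits_tail (a : ℕ → ℕ) (n : ℕ) :
    ‖(∑' i : ℕ, (a i : ℤ_[p]) * (p:ℤ_[p])^i)
      - (∑ i ∈ Finset.range n, (a i:ℤ_[p]) * (p:ℤ_[p])^i)‖ ≤ ((p:ℝ)⁻¹)^n := by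
  have hs : Summable (fun i => (a i : ℤ_[p]) * (p:ℤ_[p])^i) := summable_aux _
  have key := Summable.sum_add_tsum_nat_add n hs
  have hdiff : (∑' i : ℕ, (a i : ℤ_[p]) * (p:ℤ_[p])^i)
      - (∑ i ∈ Finset.range n, (a i:ℤ_[p]) * (p:ℤ_[p])^i)
      = ∑' i : ℕ, (a (i+n) : ℤ_[p]) * (p:ℤ_[p])^(i+n) := by
    rw [← key]; ring
  rw [hdiff]
  refine norm_tsum_le _ (by positivity) (fun i => ?_)
  calc ‖(a (i+n) : ℤ_[p]) * (p:ℤ_[p])^(i+n)‖ ≤ ((p:ℝ)⁻¹)^(i+n) := norm_term_le _ _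
    _ ≤ ((p:ℝ)⁻¹)^n := pow_le_pow_of_le_one q_pos.le q_lt_one.le (by omega)

lemma digits_agree {a b : ℕ → ℕ} (ha : ∀ i, a i < p) (hb : ∀ i, b i < p) {n : ℕ}
    (h : ‖(∑' i : ℕ, (a i:ℤ_[p]) * (p:ℤ_[p])^i) - (∑' i : ℕ, (b i:ℤ_[p]) * (p:ℤ_[p])^i)‖
      ≤ ((p:ℝ)⁻¹)^n) :
    ∀ i < n, a i = b i := by
  set Na := ∑ i ∈ Finset.range n, a i * p ^ i with hNa
  set Nb := ∑ i ∈ Finset.range n, b i * p ^ i with hNb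
  set x := ∑' i : ℕ, (a i:ℤ_[p]) * (p:ℤ_[p])^i with hx
  set y := ∑' i : ℕ, (b i:ℤ_[p]) * (p:ℤ_[p])^i with hy
  have hcastA : ((Na : ℕ) : ℤ_[p]) = ∑ i ∈ Finset.range n, (a i:ℤ_[p]) * (p:ℤ_[p])^i := by
    rw [hNa]; push_cast; ring_nf
    exact Finset.sum_congr rfl (fun _ _ => mul_comm _ _)
  have hcastB : ((Nb : ℕ) : ℤ_[p]) = ∑ i ∈ Finset.range n, (b i:ℤ_[p]) * (p:ℤ_[p])^i := by
    rw [hNb]; push_cast; ring_nf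
    exact Finset.sum_congr rfl (fun _ _ => mul_comm _ _)
  have h1 : ‖((Na : ℕ) : ℤ_[p]) - ((Nb : ℕ) : ℤ_[p])‖ ≤ ((p:ℝ)⁻¹)^n := by
    have e : ((Na : ℕ) : ℤ_[p]) - ((Nb : ℕ) : ℤ_[p])
        = (((Na : ℕ) : ℤ_[p]) - x) + ((x - y) + (y - ((Nb : ℕ) : ℤ_[p]))) := by ring
    rw [e]
    refine le_trans (IsUltrametricDist.norm_add_le_max _ _) (max_le ?_ (le_trans
      (IsUltrametricDist.norm_add_le_max _ _) (max_le h ?_)))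
    · rw [hcastA, ← norm_neg, neg_sub]; exact digits_tail a n
    · rw [hcastB]; exact digits_tail b n
  have hdvd : ((p:ℤ) ^ n) ∣ ((Na : ℤ) - (Nb : ℤ)) := by
    rw [← PadicInt.norm_int_le_pow_iff_dvd]
    push_cast
    rw [← q_pow] at *
    exact h1
  have hlt : |((Na : ℤ) - (Nb : ℤ))| < (p:ℤ) ^ n := by
    have l1 : Na < p ^ n := sum_digits_lt a ha n
    have l2 : Nb < p ^ n := sum_digits_lt b hb n
    rw [abs_lt]
    zify at l1 l2
    omega
  have h0 : ((Na : ℤ) - (Nb : ℤ)) = 0 := Int.eq_zero_of_abs_lt_dvd hdvd hlt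
  have hNN : Na = Nb := by omega
  exact nat_digits_unique n a b ha hb hNN

end DigitSpread

open DigitSpread
theorem digit_spreading_contraction_not_biLipschitz (p : ℕ) [Fact p.Prime]
    (R L : ℤ_[p] → ℤ_[p])
    (hRdef : ∀ a : ℕ → ℕ, (∀ i, a i < p) →
      R (∑' i : ℕ, (a i : ℤ_[p]) * (p : ℤ_[p]) ^ i) =
        ∑' i : ℕ, (a i : ℤ_[p]) * (p : ℤ_[p]) ^ (2 * i + 1))
    (hLdef : ∀ a : ℕ → ℕ, (∀ i, a i < p) →
      L (∑' i : ℕ, (a i : ℤ_[p]) * (p : ℤ_[p]) ^ i) =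
        ∑' i : ℕ, (a (2 * i + 1) : ℤ_[p]) * (p : ℤ_[p]) ^ i) :
    Function.Injective R ∧
    (∀ x y : ℤ_[p], ‖R x - R y‖ ≤ (1 / p) * ‖x - y‖) ∧
    (∀ x : ℤ_[p], L (R x) = x) ∧
    ¬ ∃ c₁ > (0 : ℝ), ∀ x y : ℤ_[p], c₁ * ‖x - y‖ ≤ ‖R x - R y‖ := by
  have hp : Fact p.Prime := inferInstance
  have hrw : ∀ (c : ℕ → ℕ), (fun i => (c i : ℤ_[p]) * (p:ℤ_[p])^(2*i+1))
      = (fun i => ((c i : ℤ_[p]) * (p:ℤ_[p])^(i+1)) * (p:ℤ_[p])^i) := by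
    intro c; funext i
    rw [show 2*i+1 = (i+1)+i by ring, pow_add]; ring
  have hsumm : ∀ (c : ℕ → ℕ), Summable (fun i => (c i : ℤ_[p]) * (p:ℤ_[p])^(2*i+1)) := by
    intro c; rw [hrw c]; exact summable_aux _
  -- Left inverse
  have h3 : ∀ x : ℤ_[p], L (R x) = x := by
    intro x
    obtain ⟨a, ha, hxa⟩ := exists_digits x
    have hRx := hRdef a ha
    rw [← hxa] at hRx
    set b : ℕ → ℕ := fun j => if j % 2 = 1 then a (j / 2) else 0 with hbdef
    have hbb : ∀ j, b j < p := by
      intro j; dsimp only [b]; split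
      · exact ha _
      · exact hp.out.pos
    have hre : (∑' j : ℕ, (b j : ℤ_[p]) * (p:ℤ_[p])^j)
        = ∑' i : ℕ, (a i : ℤ_[p]) * (p:ℤ_[p])^(2*i+1) := by
      have hinj : Function.Injective (fun k : ℕ => 2*k+1) := by
        intro u v huv
        simp only at huv; omega
      have hsupp : Function.support (fun j : ℕ => (b j : ℤ_[p]) * (p:ℤ_[p])^j)
          ⊆ Set.range (fun k : ℕ => 2*k+1) := by
        intro j hj
        by_contra hcon
        apply hj
        have hje : j % 2 = 0 := by
          by_contra hodd
          exact hcon ⟨j / 2, by simp only []; omega⟩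
        simp only [b, hje, Function.mem_support]
        norm_num
      have key := hinj.tsum_eq (f := fun j : ℕ => (b j : ℤ_[p]) * (p:ℤ_[p])^j) hsupp
      rw [← key]
      apply tsum_congr
      intro k
      have e1 : b (2*k+1) = a k := by
        simp only [b]
        have h1 : (2*k+1) % 2 = 1 := by omega
        have h2 : (2*k+1) / 2 = k := by omega
        rw [h1, h2]; simp
      simp only [e1]
    have hb21 : ∀ i, b (2*i+1) = a i := by
      intro i
      simp only [b]
      have h1 : (2*i+1) % 2 = 1 := by omega
      have h2 : (2*i+1) / 2 = i := by omega
      rw [h1, h2]; simp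
    have hLb := hLdef b hbb
    rw [hre, ← hRx] at hLb
    rw [hLb]
    rw [hxa]
    apply tsum_congr
    intro i
    rw [hb21 i]
  -- Injectivity
  have h1 : Function.Injective R := by
    intro u v huv
    rw [← h3 u, ← h3 v, huv]
  -- Lipschitz bound
  have h2 : ∀ x y : ℤ_[p], ‖R x - R y‖ ≤ (1 / p) * ‖x - y‖ := by
    intro x y
    rcases eq_or_ne x y with rfl | hne
    · simp
    obtain ⟨a, ha, hxa⟩ := exists_digits x
    obtain ⟨b, hb, hyb⟩ := exists_digits y
    have hz : x - y ≠ 0 := sub_ne_zero.mpr hne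
    set n := (x - y).valuation with hn
    have hnorm : ‖x - y‖ = ((p:ℝ)⁻¹)^n := by
      rw [PadicInt.norm_eq_zpow_neg_valuation hz, q_pow]
    have hagree : ∀ i < n, a i = b i := by
      refine digits_agree ha hb ?_
      rw [← hxa, ← hyb, ← hnorm]
    have hRx := hRdef a ha; rw [← hxa] at hRx
    have hRy := hRdef b hb; rw [← hyb] at hRy
    have hdiff : R x - R y = ∑' i : ℕ,
        ((a i : ℤ_[p]) * (p:ℤ_[p])^(2*i+1) - (b i : ℤ_[p]) * (p:ℤ_[p])^(2*i+1)) := by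
      rw [hRx, hRy, Summable.tsum_sub (hsumm a) (hsumm b)]
    have hbound : ‖R x - R y‖ ≤ ((p:ℝ)⁻¹)^(n+1) := by
      rw [hdiff]
      refine norm_tsum_le _ (by positivity) (fun i => ?_)
      rcases lt_or_ge i n with hi | hi
      · rw [hagree i hi, sub_self, norm_zero]
        positivity
      · have e : (a i : ℤ_[p]) * (p:ℤ_[p])^(2*i+1) - (b i : ℤ_[p]) * (p:ℤ_[p])^(2*i+1)
            = ((a i : ℤ_[p]) - (b i : ℤ_[p])) * (p:ℤ_[p])^(2*i+1) := by ring
        rw [e]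
        refine le_trans (norm_term_le _ _) ?_
        exact pow_le_pow_of_le_one q_pos.le q_lt_one.le (by omega)
    rw [hnorm, one_div, pow_succ] at *
    calc ‖R x - R y‖ ≤ ((p:ℝ)⁻¹)^n * (p:ℝ)⁻¹ := hbound
      _ = (p:ℝ)⁻¹ * ((p:ℝ)⁻¹)^n := by ring
  refine ⟨h1, h2, h3, ?_⟩
  -- not bi-Lipschitz
  rintro ⟨c, hc, hineq⟩
  have hR0 : R 0 = 0 := by
    have h := hRdef (fun _ => 0) (fun _ => hp.out.pos)
    simpa using h
  have hRn : ∀ m : ℕ, R ((p:ℤ_[p])^m) = (p:ℤ_[p])^(2*m+1) := by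
    intro m
    have hd : ∀ i, (fun i => if i = m then 1 else 0) i < p := by
      intro i; dsimp only; split
      · exact hp.out.one_lt
      · exact hp.out.pos
    have h := hRdef (fun i => if i = m then 1 else 0) hd
    have e1 : (∑' i : ℕ, (((if i = m then 1 else 0 : ℕ)) : ℤ_[p]) * (p:ℤ_[p])^i)
        = (p:ℤ_[p])^m := by
      rw [tsum_eq_single m]
      · simp
      · intro j hj; simp [hj]
    have e2 : (∑' i : ℕ, (((if i = m then 1 else 0 : ℕ)) : ℤ_[p]) * (p:ℤ_[p])^(2*i+1))
        = (p:ℤ_[p])^(2*m+1) := by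
      rw [tsum_eq_single m]
      · simp
      · intro j hj; simp [hj]
    rw [e1, e2] at h
    exact h
  obtain ⟨m, hm⟩ := exists_pow_lt_of_lt_one hc (q_lt_one (p := p))
  have hkey := hineq ((p:ℤ_[p])^m) 0
  rw [sub_zero, hRn, hR0, sub_zero] at hkey
  have en1 : ‖(p:ℤ_[p])^m‖ = ((p:ℝ)⁻¹)^m := by rw [PadicInt.norm_p_pow, ← q_pow]
  have en2 : ‖(p:ℤ_[p])^(2*m+1)‖ = ((p:ℝ)⁻¹)^(2*m+1) := by
    rw [PadicInt.norm_p_pow, ← q_pow]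
  rw [en1, en2] at hkey
  have hq0 : (0:ℝ) < ((p:ℝ)⁻¹)^m := pow_pos q_pos m
  have step1 : ((p:ℝ)⁻¹)^(2*m+1) ≤ ((p:ℝ)⁻¹)^m * ((p:ℝ)⁻¹)^m := by
    rw [← pow_add]
    exact pow_le_pow_of_le_one q_pos.le q_lt_one.le (by omega)
  have step2 : ((p:ℝ)⁻¹)^m * ((p:ℝ)⁻¹)^m < c * ((p:ℝ)⁻¹)^m :=
    mul_lt_mul_of_pos_right hm hq0
  linarith
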